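/- Convergence to fixed point: in the discrete auto rate-tuning model with a constant learning rate λ > 0, the effective learning rate ratio of any two layers converges to 1 in the infinite time limit: lim_{i→∞} R(i) = 1. -/

import Mathlib

open Filter Finset Topology

lemma sq_div_tendsto_aux (K : ℝ) (hK : 0 < K) (s : ℕ → ℝ) (hs0 : 0 < s 0)
    (hs : ∀ i, s (i + 1) = s i + K / s i) :
    Tendsto (fun n : ℕ => s n ^ 2 / n) atTop (𝓝 (2 * K)) := by
  have hpos : ∀ n, 0 < s n := by
    intro n
    induction n with
    | zero => exact hs0
    | succ n ih => rw [hs]; positivity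
  set a : ℕ → ℝ := fun n => s n ^ 2 with ha_def
  have hapos : ∀ n, 0 < a n := fun n => pow_pos (hpos n) 2
  have ha : ∀ n, a (n + 1) = a n + (2 * K + K ^ 2 / a n) := by
    intro n
    have hne : s n ≠ 0 := (hpos n).ne'
    simp only [ha_def, hs]
    field_simp
    ring
  have hlow : ∀ n, a 0 + 2 * K * n ≤ a n := by
    intro n
    induction n with
    | zero => simp
    | succ n ih =>
      rw [ha n]
      have : 0 < K ^ 2 / a n := div_pos (pow_pos hK 2) (hapos n)
      push_cast
      nlinarith
  have hatop : Tendsto a atTop atTop := by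
    apply tendsto_atTop_mono hlow
    apply tendsto_atTop_add_const_left
    exact Tendsto.const_mul_atTop (by linarith) tendsto_natCast_atTop_atTop
  have hd : Tendsto (fun n => a (n + 1) - a n) atTop (𝓝 (2 * K)) := by
    have h1 : Tendsto (fun n => 2 * K + K ^ 2 / a n) atTop (𝓝 (2 * K + 0)) := by
      apply Tendsto.const_add
      exact Tendsto.div_atTop tendsto_const_nhds hatop
    rw [add_zero] at h1
    refine h1.congr fun n => ?_
    rw [ha n]; ring
  have hces := hd.cesaro
  have hsum : ∀ n, ∑ i ∈ range n, (a (i + 1) - a i) = a n - a 0 :=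
    fun n => Finset.sum_range_sub a n
  have h2 : Tendsto (fun n : ℕ => (n : ℝ)⁻¹ * (a n - a 0)) atTop (𝓝 (2 * K)) := by
    refine hces.congr fun n => ?_
    rw [hsum n]
  have h3 : Tendsto (fun n : ℕ => (n : ℝ)⁻¹ * (a n - a 0) + a 0 * (n : ℝ)⁻¹)
      atTop (𝓝 (2 * K + 0)) := by
    apply h2.add
    have h4 : Tendsto (fun n : ℕ => a 0 * (n : ℝ)⁻¹) atTop (𝓝 (a 0 * 0)) :=
      Tendsto.const_mul _ (tendsto_inv_atTop_zero.comp tendsto_natCast_atTop_atTop)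
    rw [mul_zero] at h4
    exact h4
  rw [add_zero] at h3
  refine h3.congr' ?_
  filter_upwards [eventually_gt_atTop 0] with n hn
  have hne : (n : ℝ) ≠ 0 := Nat.cast_ne_zero.mpr hn.ne'
  field_simp
  rw [sub_add_cancel]

theorem elr_ratio_tendsto_one
    (cl ck : ℝ) (hcl : 0 < cl) (hck : 0 < ck)
    (lam : ℝ) (hlam : 0 < lam)
    (sl sk : ℕ → ℝ) (hsl0 : 0 < sl 0) (hsk0 : 0 < sk 0)
    (hsl : ∀ i, sl (i + 1) = sl i + lam ^ 2 * cl ^ 2 / sl i)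
    (hsk : ∀ i, sk (i + 1) = sk i + lam ^ 2 * ck ^ 2 / sk i)
    (R : ℕ → ℝ) (hR : ∀ i, R i = cl * sk i / (ck * sl i)) :
    Filter.Tendsto R Filter.atTop (nhds 1) := by
  have hKl : (0:ℝ) < lam ^ 2 * cl ^ 2 := by positivity
  have hKk : (0:ℝ) < lam ^ 2 * ck ^ 2 := by positivity
  have hl := sq_div_tendsto_aux _ hKl sl hsl0 hsl
  have hk := sq_div_tendsto_aux _ hKk sk hsk0 hsk
  have hslpos : ∀ n, 0 < sl n := by
    intro n; induction n with
    | zero => exact hsl0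
    | succ n ih => rw [hsl]; positivity
  have hskpos : ∀ n, 0 < sk n := by
    intro n; induction n with
    | zero => exact hsk0
    | succ n ih => rw [hsk]; positivity
  have hRsq : Tendsto (fun n => R n ^ 2) atTop (𝓝 1) := by
    have hne : (2 * (lam ^ 2 * cl ^ 2)) ≠ 0 := by positivity
    have h1 : Tendsto (fun n : ℕ => cl ^ 2 / ck ^ 2 * ((sk n ^ 2 / n) / (sl n ^ 2 / n)))
        atTop (𝓝 (cl ^ 2 / ck ^ 2 * ((2 * (lam ^ 2 * ck ^ 2)) / (2 * (lam ^ 2 * cl ^ 2))))) :=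
      Tendsto.const_mul _ (hk.div hl hne)
    have heq : cl ^ 2 / ck ^ 2 * ((2 * (lam ^ 2 * ck ^ 2)) / (2 * (lam ^ 2 * cl ^ 2))) = 1 := by
      field_simp
    rw [heq] at h1
    refine h1.congr' ?_
    filter_upwards [eventually_gt_atTop 0] with n hn
    have hne1 : (n : ℝ) ≠ 0 := Nat.cast_ne_zero.mpr hn.ne'
    have h2 := (hslpos n).ne'
    have h3 := (hskpos n).ne'
    rw [hR n]
    field_simp
  have hsqrt := (Real.continuous_sqrt.tendsto 1).comp hRsq
  rw [Real.sqrt_one] at hsqrt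
  refine hsqrt.congr fun n => ?_
  have hRpos : 0 < R n := by
    rw [hR n]; exact div_pos (mul_pos hcl (hskpos n)) (mul_pos hck (hslpos n))
  simp [Real.sqrt_sq hRpos.le]
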